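/- arXiv:2204.03033 — 2 statements merged into one kernel-verified Lean document; each statement's English description precedes it below -/
import Mathlib

section
/- The limit c_k := lim_{n→∞} M(k,n)/n exists for every positive integer k. -/
/-- The simple transposition `s_i = (i, i+1)` (1-indexed values) in `S_n`,
realized on `Fin n` (0-indexed positions `i-1` and `i`); junk value `1` otherwise. -/
def sgen (n i : ℕ) : Equiv.Perm (Fin n) :=
  if h : 0 < i ∧ i < n then Equiv.swap ⟨i - 1, by omega⟩ ⟨i, h.2⟩ else 1

/-- `l` is a reduced word for `w ∈ S_n`: its product is `w` and it has minimal length. -/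
def IsReducedWordFor (n : ℕ) (l : List ℕ) (w : Equiv.Perm (Fin n)) : Prop :=
  (l.map (sgen n)).prod = w ∧
    ∀ l' : List ℕ, (l'.map (sgen n)).prod = w → l.length ≤ l'.length

/-- The longest permutation `w_0 = n (n-1) ⋯ 2 1` of `S_n`. -/
def longestPerm (n : ℕ) : Equiv.Perm (Fin n) := Fin.revPerm

/-- `M(k,n)`: the maximum multiplicity of `s_k` among reduced words of `w_0 ∈ S_n`. -/
noncomputable def Mmax (k n : ℕ) : ℕ :=
  sSup {N | ∃ l : List ℕ, IsReducedWordFor n l (longestPerm n) ∧ l.count k = N}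

/-- Two finite sets are weakly separated. -/
def WeaklySeparated (I J : Finset ℕ) : Prop :=
  (∀ a ∈ I \ J, ∀ b ∈ J \ I, a < b) ∨ (∀ b ∈ J \ I, ∀ a ∈ I \ J, b < a)

/-- A monotone weakly separated path: pairwise weakly separated, and each step removes
one element `y` and adds one element `x > y`. -/
def IsMWSPath (P : List (Finset ℕ)) : Prop :=
  (∀ A ∈ P, ∀ B ∈ P, WeaklySeparated A B) ∧
    List.Chain' (fun A B => ∃ x y, y ∈ A ∧ x ∉ A ∧ y < x ∧ B = insert x (A.erase y)) P

section Aux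
open Finset Equiv

variable {n : ℕ}

/-- inversion set (pairs of values) -/
def Qv {n : ℕ} (w : Equiv.Perm (Fin n)) : Finset (Fin n × Fin n) :=
  Finset.univ.filter fun p => p.1 < p.2 ∧ w⁻¹ p.2 < w⁻¹ p.1

def invN {n : ℕ} (w : Equiv.Perm (Fin n)) : ℕ := (Qv w).card

def opair {n : ℕ} (a b : Fin n) : Fin n × Fin n := if a < b then (a, b) else (b, a)

lemma mem_Qv {w : Equiv.Perm (Fin n)} {x y : Fin n} :
    (x, y) ∈ Qv w ↔ x < y ∧ w⁻¹ y < w⁻¹ x := by simp [Qv]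

lemma sgen_eq_swap {j : ℕ} (h1 : 0 < j) (h2 : j < n) :
    sgen n j = Equiv.swap ⟨j - 1, by omega⟩ ⟨j, h2⟩ := by
  unfold sgen; rw [dif_pos ⟨h1, h2⟩]

lemma swap_adj_lt {p1 p2 u v : Fin n} (hadj : (p1 : ℕ) + 1 = p2) :
    (Equiv.swap p1 p2) v < (Equiv.swap p1 p2) u ↔
      (if (u = p1 ∧ v = p2) ∨ (u = p2 ∧ v = p1) then ¬ (v < u) else v < u) := by
  simp only [Equiv.swap_apply_def, Fin.lt_def, Fin.ext_iff]
  split_ifs <;> omega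

lemma Qv_mul_sgen {j : ℕ} (h1 : 0 < j) (h2 : j < n) (w : Equiv.Perm (Fin n)) :
    Qv (w * sgen n j) = symmDiff (Qv w) {opair (w ⟨j - 1, by omega⟩) (w ⟨j, h2⟩)} := by
  have hp1 : j - 1 < n := by omega
  have hadj : ((⟨j - 1, hp1⟩ : Fin n) : ℕ) + 1 = ((⟨j, h2⟩ : Fin n) : ℕ) := by simp; omega
  have hP12 : (⟨j - 1, hp1⟩ : Fin n) ≠ ⟨j, h2⟩ := by simp [Fin.ext_iff]; omega
  have hinvz : ∀ z, (w * sgen n j)⁻¹ z = Equiv.swap ⟨j - 1, hp1⟩ ⟨j, h2⟩ (w⁻¹ z) := by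
    intro z
    rw [sgen_eq_swap h1 h2, mul_inv_rev]
    simp [Equiv.Perm.mul_apply]
  ext ⟨x, y⟩
  rw [Finset.mem_symmDiff, mem_Qv, mem_Qv, Finset.mem_singleton, hinvz, hinvz,
    swap_adj_lt hadj]
  by_cases hA : (w⁻¹ x = ⟨j - 1, hp1⟩ ∧ w⁻¹ y = ⟨j, h2⟩) ∨
      (w⁻¹ x = ⟨j, h2⟩ ∧ w⁻¹ y = ⟨j - 1, hp1⟩)
  · rw [if_pos hA]
    have hwne : w ⟨j - 1, hp1⟩ ≠ w ⟨j, h2⟩ := fun h => hP12 (w.injective h)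
    rcases hA with ⟨ha, hb⟩ | ⟨ha, hb⟩
    · have hx : x = w ⟨j - 1, hp1⟩ := by rw [← ha]; simp
      have hy : y = w ⟨j, h2⟩ := by rw [← hb]; simp
      subst hx hy
      rw [ha, hb]
      have hQ : ¬ ((⟨j, h2⟩ : Fin n) < ⟨j - 1, hp1⟩) := by simp [Fin.lt_def]
      by_cases hO : w ⟨j - 1, hp1⟩ < w ⟨j, h2⟩
      · simp [opair, hO, hQ]
      · simp [opair, hO, hQ, Prod.ext_iff, hwne, Ne.symm hwne]
    · have hx : x = w ⟨j, h2⟩ := by rw [← ha]; simp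
      have hy : y = w ⟨j - 1, hp1⟩ := by rw [← hb]; simp
      subst hx hy
      rw [ha, hb]
      have hQ : ((⟨j - 1, hp1⟩ : Fin n) < ⟨j, h2⟩) := by simp [Fin.lt_def]; omega
      by_cases hO : w ⟨j - 1, hp1⟩ < w ⟨j, h2⟩
      · simp [opair, hO, hQ, Prod.ext_iff]
        constructor
        · intro h; exact absurd h (asymm hO)
        · intro h; omega
      · have hO' : w ⟨j, h2⟩ < w ⟨j - 1, hp1⟩ :=
          lt_of_le_of_ne (not_lt.mp hO) (Ne.symm hwne)
        simp [opair, hO, hQ, hO']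
  · rw [if_neg hA]
    have hmem : ¬ ((x, y) = opair (w ⟨j - 1, hp1⟩) (w ⟨j, h2⟩)) := by
      intro h
      unfold opair at h
      split_ifs at h with hO <;> rw [Prod.ext_iff] at h <;>
        simp only at h
      · exact hA (Or.inl ⟨by rw [h.1]; simp, by rw [h.2]; simp⟩)
      · exact hA (Or.inr ⟨by rw [h.1]; simp, by rw [h.2]; simp⟩)
    tauto

end Aux

section Aux2
open Finset Equiv

variable {n : ℕ}

lemma symmDiff_singleton_of_mem {α : Type*} [DecidableEq α] {A : Finset α} {e : α} (h : e ∈ A) :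
    symmDiff A {e} = A.erase e := by
  ext x
  by_cases hx : x = e <;> simp [Finset.mem_symmDiff, Finset.mem_erase, hx, h]

lemma symmDiff_singleton_of_not_mem {α : Type*} [DecidableEq α] {A : Finset α} {e : α}
    (h : e ∉ A) : symmDiff A {e} = insert e A := by
  ext x
  by_cases hx : x = e <;> simp [Finset.mem_symmDiff, Finset.mem_insert, hx, h]

lemma invN_one : invN (1 : Equiv.Perm (Fin n)) = 0 := by
  rw [invN, Qv, Finset.card_eq_zero, Finset.filter_eq_empty_iff]
  intro x _ hx
  have h2 := hx.2
  simp only [inv_one, Equiv.Perm.one_apply] at h2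
  exact absurd h2 (not_lt.mpr hx.1.le)

lemma sgen_junk {i : ℕ} (h : ¬ (0 < i ∧ i < n)) : sgen n i = 1 := by
  unfold sgen; rw [dif_neg h]

lemma invN_mul_sgen_le (w : Equiv.Perm (Fin n)) (i : ℕ) :
    invN (w * sgen n i) ≤ invN w + 1 ∧ invN w ≤ invN (w * sgen n i) + 1 := by
  by_cases h : 0 < i ∧ i < n
  · rw [invN, invN, Qv_mul_sgen h.1 h.2]
    by_cases he : opair (w ⟨i - 1, by omega⟩) (w ⟨i, h.2⟩) ∈ Qv w
    · rw [symmDiff_singleton_of_mem he]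
      have := Finset.card_erase_le (s := Qv w)
        (a := opair (w ⟨i - 1, by omega⟩) (w ⟨i, h.2⟩))
      have h2 := Finset.card_erase_add_one he
      omega
    · rw [symmDiff_singleton_of_not_mem he, Finset.card_insert_of_notMem he]
      omega
  · rw [sgen_junk h, mul_one]; omega

lemma invN_mul_prod_le (l : List ℕ) (w : Equiv.Perm (Fin n)) :
    invN (w * (l.map (sgen n)).prod) ≤ invN w + l.length := by
  induction l generalizing w with
  | nil => simp
  | cons a t ih =>
    rw [List.map_cons, List.prod_cons, ← mul_assoc]
    calc invN (w * sgen n a * (t.map (sgen n)).prod) ≤ invN (w * sgen n a) + t.length := ih _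
    _ ≤ invN w + 1 + t.length := by have := (invN_mul_sgen_le w a).1; omega
    _ = invN w + (a :: t).length := by simp; omega

lemma invN_le_length (l : List ℕ) {w : Equiv.Perm (Fin n)}
    (h : (l.map (sgen n)).prod = w) : invN w ≤ l.length := by
  have := invN_mul_prod_le l (1 : Equiv.Perm (Fin n))
  rw [one_mul, h, invN_one] at this
  simpa using this

lemma invN_eq_zero {w : Equiv.Perm (Fin n)} (h : invN w = 0) : w = 1 := by
  have hQ : Qv w = ∅ := Finset.card_eq_zero.mp h
  have hmono : StrictMono (w⁻¹ : Equiv.Perm (Fin n)) := by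
    intro a b hab
    have : (a, b) ∉ Qv w := by rw [hQ]; simp
    rw [mem_Qv] at this
    push_neg at this
    exact lt_of_le_of_ne (this hab) (fun hc => (ne_of_lt hab) (w⁻¹.injective hc))
  have : (w⁻¹ : Equiv.Perm (Fin n)) = 1 := by
    have hr : Set.range (w⁻¹ : Equiv.Perm (Fin n)) = Set.range (id : Fin n → Fin n) := by
      rw [Set.range_id, Set.range_eq_univ.mpr (w⁻¹ : Equiv.Perm (Fin n)).surjective]
    have inst : WellFoundedLT (Fin n) := inferInstance
    have h := (@StrictMono.range_inj _ _ _ _ inst _ id hmono strictMono_id).mp hr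
    exact Equiv.ext fun x => by simpa using congrFun h x
  rw [← inv_inv w, this]; simp

lemma exists_reduced_word (w : Equiv.Perm (Fin n)) :
    ∃ l : List ℕ, (l.map (sgen n)).prod = w ∧ l.length = invN w ∧ ∀ i ∈ l, 0 < i ∧ i < n := by
  suffices H : ∀ N (w : Equiv.Perm (Fin n)), invN w = N →
      ∃ l : List ℕ, (l.map (sgen n)).prod = w ∧ l.length = invN w ∧ ∀ i ∈ l, 0 < i ∧ i < n by
    exact H _ w rfl
  intro N
  induction N using Nat.strong_induction_on with
  | _ N ih =>
    intro w hw
    rcases Nat.eq_zero_or_pos N with h0 | hpos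
    · subst h0
      exact ⟨[], by simp [invN_eq_zero hw], by simp [hw], by simp⟩
    · -- find a descent
      have hdesc : ∃ j, ∃ (h1 : 0 < j) (h2 : j < n), w ⟨j, h2⟩ < w ⟨j - 1, by omega⟩ := by
        by_contra hc
        push_neg at hc
        have hmono : StrictMono w := by
          cases n with
          | zero => exact fun a => a.elim0
          | succ m =>
            rw [Fin.strictMono_iff_lt_succ]
            intro i
            have hle := hc ((i : ℕ) + 1) (by omega) (by omega)
            have h2 : (⟨(i : ℕ) + 1 - 1, by omega⟩ : Fin (m + 1)) = Fin.castSucc i := by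
              simp [Fin.ext_iff]
            have h3 : (⟨(i : ℕ) + 1, by omega⟩ : Fin (m + 1)) = i.succ := by
              simp [Fin.ext_iff]
            rw [h2, h3] at hle
            refine lt_of_le_of_ne hle (fun hc2 => ?_)
            have := w.injective hc2
            simp [Fin.ext_iff] at this
        have hw1 : w = 1 := by
          have hr : Set.range w = Set.range (id : Fin n → Fin n) := by
            rw [Set.range_id, Set.range_eq_univ.mpr w.surjective]
          have inst : WellFoundedLT (Fin n) := inferInstance
          have h := (@StrictMono.range_inj _ _ _ _ inst _ id hmono strictMono_id).mp hr
          exact Equiv.ext fun x => by simpa using congrFun h x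
        rw [hw1, invN_one] at hw
        omega
      obtain ⟨j, h1, h2, hdj⟩ := hdesc
      set w' := w * sgen n j with hw'
      have he : opair (w ⟨j - 1, by omega⟩) (w ⟨j, h2⟩) ∈ Qv w := by
        have : ¬ (w ⟨j - 1, by omega⟩ < w ⟨j, h2⟩) := not_lt.mpr (le_of_lt hdj)
        rw [opair, if_neg this, mem_Qv]
        refine ⟨hdj, ?_⟩
        simp [Fin.lt_def]
        omega
      have hcard : invN w' = N - 1 := by
        rw [invN, hw', Qv_mul_sgen h1 h2, symmDiff_singleton_of_mem he]
        rw [Finset.card_erase_of_mem he]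
        rw [invN] at hw; omega
      obtain ⟨l', hl1, hl2, hl3⟩ := ih (N - 1) (by omega) w' hcard
      refine ⟨l' ++ [j], ?_, ?_, ?_⟩
      · rw [List.map_append, List.prod_append, hl1]
        simp [hw', mul_assoc, sgen_eq_swap h1 h2, Equiv.swap_mul_self]
      · rw [List.length_append, hl2, hcard, hw]
        simp; omega
      · intro i hi
        rcases List.mem_append.mp hi with h | h
        · exact hl3 i h
        · simp at h; subst h; exact ⟨h1, h2⟩

lemma isReducedWordFor_iff {l : List ℕ} {w : Equiv.Perm (Fin n)} :
    IsReducedWordFor n l w ↔ (l.map (sgen n)).prod = w ∧ l.length = invN w := by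
  constructor
  · rintro ⟨hp, hmin⟩
    refine ⟨hp, le_antisymm ?_ (invN_le_length l hp)⟩
    obtain ⟨l', h1, h2, _⟩ := exists_reduced_word w
    calc l.length ≤ l'.length := hmin l' h1
    _ = invN w := h2
  · rintro ⟨hp, hlen⟩
    exact ⟨hp, fun l' hl' => by rw [hlen]; exact invN_le_length l' hl'⟩

end Aux2

section Aux3
open Finset Equiv

lemma card_filter_val_lt {N c : ℕ} (h : c ≤ N) :
    (Finset.univ.filter fun x : Fin N => (x : ℕ) < c).card = c := by
  have key : (Finset.univ.filter fun x : Fin N => (x : ℕ) < c).card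
      = (Finset.univ : Finset (Fin c)).card := by
    exact Finset.card_bij' (s := Finset.univ.filter fun x : Fin N => (x : ℕ) < c)
      (t := (Finset.univ : Finset (Fin c)))
      (fun x hx => ⟨(x : ℕ), by simpa using hx⟩) (fun y _ => ⟨(y : ℕ), by omega⟩)
      (fun a ha => by simp) (fun a ha => by simp [a.2]) (fun a ha => by simp)
      (fun a ha => by simp)
  rw [key, Finset.card_univ, Fintype.card_fin]

lemma card_filter_val_ge {N c : ℕ} (h : c ≤ N) :
    (Finset.univ.filter fun x : Fin N => c ≤ (x : ℕ)).card = N - c := by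
  have hneg := Finset.card_filter_add_card_filter_not
    (s := (Finset.univ : Finset (Fin N))) (p := fun x => (x : ℕ) < c)
  rw [card_filter_val_lt h, Finset.card_univ, Fintype.card_fin] at hneg
  have : (Finset.univ.filter fun x : Fin N => ¬ (x : ℕ) < c)
      = (Finset.univ.filter fun x : Fin N => c ≤ (x : ℕ)) := by
    apply Finset.filter_congr; intro x _; simp
  rw [this] at hneg
  omega

lemma card_diag_pairs (N : ℕ) :
    (Finset.univ.filter fun p : Fin N × Fin N => p.1 = p.2).card = N := by
  have key : (Finset.univ.filter fun p : Fin N × Fin N => p.1 = p.2).card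
      = (Finset.univ : Finset (Fin N)).card := by
    exact Finset.card_bij' (s := Finset.univ.filter fun p : Fin N × Fin N => p.1 = p.2)
      (t := (Finset.univ : Finset (Fin N)))
      (fun p _ => p.1) (fun x _ => ((x, x) : Fin N × Fin N))
      (fun a ha => by simp)
      (fun a ha => by simp)
      (fun a ha => Prod.ext_iff.mpr ⟨rfl, by simpa using ha⟩)
      (fun a ha => by simp)
  rw [key, Finset.card_univ, Fintype.card_fin]

lemma two_mul_card_lt_pairs (N : ℕ) :
    2 * (Finset.univ.filter fun p : Fin N × Fin N => p.1 < p.2).card + N = N * N := by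
  have hswap : (Finset.univ.filter fun p : Fin N × Fin N => p.2 < p.1).card
      = (Finset.univ.filter fun p : Fin N × Fin N => p.1 < p.2).card := by
    exact Finset.card_bij'
      (s := Finset.univ.filter fun p : Fin N × Fin N => p.2 < p.1)
      (t := Finset.univ.filter fun p : Fin N × Fin N => p.1 < p.2)
      (fun p _ => Prod.swap p) (fun p _ => Prod.swap p)
      (fun a ha => by simpa using ha) (fun a ha => by simpa using ha)
      (fun a ha => by simp) (fun a ha => by simp)
  have hneg := Finset.card_filter_add_card_filter_not
    (s := (Finset.univ : Finset (Fin N × Fin N))) (p := fun p => p.1 < p.2)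
  rw [Finset.card_univ, Fintype.card_prod, Fintype.card_fin] at hneg
  have hsplit : (Finset.univ.filter fun p : Fin N × Fin N => ¬ p.1 < p.2)
      = (Finset.univ.filter fun p : Fin N × Fin N => p.2 < p.1)
        ∪ (Finset.univ.filter fun p : Fin N × Fin N => p.1 = p.2) := by
    ext p
    simp only [Finset.mem_filter, Finset.mem_univ, true_and, Finset.mem_union]
    simp only [Fin.lt_def, Fin.ext_iff]
    omega
  have hdisj : Disjoint (Finset.univ.filter fun p : Fin N × Fin N => p.2 < p.1)
      (Finset.univ.filter fun p : Fin N × Fin N => p.1 = p.2) := by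
    rw [Finset.disjoint_filter]
    intro p _ h1 h2
    rw [h2] at h1
    exact lt_irrefl _ h1
  rw [hsplit, Finset.card_union_of_disjoint hdisj, card_diag_pairs, hswap] at hneg
  omega

lemma two_mul_invN_longestPerm (N : ℕ) : 2 * invN (longestPerm N) + N = N * N := by
  have hQ : Qv (longestPerm N) = Finset.univ.filter fun p : Fin N × Fin N => p.1 < p.2 := by
    ext p
    simp only [Qv, Finset.mem_filter, Finset.mem_univ, true_and, longestPerm]
    have h1 : (Fin.revPerm (n := N))⁻¹ = Fin.revPerm := rfl
    simp only [Finset.mem_filter, Finset.mem_univ, true_and, h1]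
    simp only [Fin.revPerm_apply, Fin.rev_lt_rev]
    tauto
  rw [invN, hQ]
  exact two_mul_card_lt_pairs N

def bswap (n m : ℕ) : Equiv.Perm (Fin (n + m)) where
  toFun x := ⟨if (x : ℕ) < n then (x : ℕ) + m else (x : ℕ) - n, by have := x.2; simp; split_ifs <;> omega⟩
  invFun y := ⟨if (y : ℕ) < m then (y : ℕ) + n else (y : ℕ) - m, by have := y.2; simp; split_ifs <;> omega⟩
  left_inv x := by
    have := x.2
    apply Fin.ext
    simp only [Fin.val_mk]
    split_ifs <;> omega
  right_inv y := by
    have := y.2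
    apply Fin.ext
    simp only [Fin.val_mk]
    split_ifs <;> omega

lemma invN_bswap (n m : ℕ) : invN (bswap n m) = n * m := by
  have hQ : Qv (bswap n m) = (Finset.univ.filter fun x : Fin (n + m) => (x : ℕ) < m) ×ˢ
      (Finset.univ.filter fun x : Fin (n + m) => m ≤ (x : ℕ)) := by
    ext ⟨x, y⟩
    have hx := x.2
    have hy := y.2
    simp only [Qv, Finset.mem_filter, Finset.mem_univ, true_and, Finset.mem_product,
      Equiv.Perm.inv_def, bswap, Equiv.coe_fn_symm_mk, Fin.lt_def, Fin.val_mk]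
    split_ifs <;> omega
  rw [invN, hQ, Finset.card_product, card_filter_val_lt (by omega), card_filter_val_ge (by omega)]
  have : n + m - m = n := by omega
  rw [this, Nat.mul_comm]

end Aux3

section Aux4
open Finset Equiv

lemma sgen_apply_small {m N i : ℕ} (hmN : m ≤ N) (h1 : 0 < i) (h2 : i < m) (x : Fin N) :
    ((sgen N i) x : ℕ) = if h : (x : ℕ) < m then ((sgen m i) ⟨(x : ℕ), h⟩ : ℕ) else (x : ℕ) := by
  rw [sgen_eq_swap h1 (show i < N by omega), sgen_eq_swap h1 h2]
  simp only [Equiv.swap_apply_def]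
  split_ifs <;> simp_all [Fin.ext_iff] <;> omega

lemma prod_sgen_congr {m N : ℕ} (hmN : m ≤ N) (l : List ℕ) (hl : ∀ i ∈ l, 0 < i ∧ i < m)
    (x : Fin N) :
    (((l.map (sgen N)).prod) x : ℕ)
      = if h : (x : ℕ) < m then (((l.map (sgen m)).prod) ⟨(x : ℕ), h⟩ : ℕ) else (x : ℕ) := by
  induction l generalizing x with
  | nil => simp
  | cons a t ih =>
    simp only [List.map_cons, List.prod_cons, Equiv.Perm.mul_apply]
    have ha := hl a (by simp)
    have iht := ih (fun i hi => hl i (by simp [hi]))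
    by_cases hx : (x : ℕ) < m
    · rw [dif_pos hx]
      have hv := iht x
      rw [dif_pos hx] at hv
      have hfin : ((t.map (sgen N)).prod) x
          = ⟨(((t.map (sgen m)).prod) ⟨(x : ℕ), hx⟩ : ℕ), by
              have := (((t.map (sgen m)).prod) ⟨(x : ℕ), hx⟩).2; omega⟩ :=
        Fin.ext (by exact hv)
      rw [hfin, sgen_apply_small hmN ha.1 ha.2]
      rw [dif_pos (show ((⟨(((t.map (sgen m)).prod) ⟨(x : ℕ), hx⟩ : ℕ), _⟩ : Fin N) : ℕ) < m
        from (((t.map (sgen m)).prod) ⟨(x : ℕ), hx⟩).2)]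
    · rw [dif_neg hx]
      have hv := iht x
      rw [dif_neg hx] at hv
      have hfin : ((t.map (sgen N)).prod) x = x := Fin.ext hv
      rw [hfin, sgen_apply_small hmN ha.1 ha.2, dif_neg hx]

lemma reduced_letters {n : ℕ} {l : List ℕ} {w : Equiv.Perm (Fin n)}
    (h : IsReducedWordFor n l w) : ∀ i ∈ l, 0 < i ∧ i < n := by
  intro i hi
  by_contra hc
  obtain ⟨s, t, rfl⟩ := List.append_of_mem hi
  have hprod : ((s ++ t).map (sgen n)).prod = w := by
    have := h.1
    rw [List.map_append, List.prod_append] at this ⊢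
    rw [List.map_cons, List.prod_cons, sgen_junk hc, one_mul] at this
    exact this
  have := h.2 (s ++ t) hprod
  simp at this

lemma mmax_le {k n c : ℕ}
    (h : ∀ l, IsReducedWordFor n l (longestPerm n) → l.count k ≤ c) : Mmax k n ≤ c := by
  apply csSup_le
  · obtain ⟨l, h1, h2, _⟩ := exists_reduced_word (longestPerm n)
    exact ⟨l.count k, l, isReducedWordFor_iff.mpr ⟨h1, h2⟩, rfl⟩
  · rintro N ⟨l, hl, rfl⟩
    exact h l hl

lemma le_mmax {k n : ℕ} (l : List ℕ) (hl : IsReducedWordFor n l (longestPerm n)) :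
    l.count k ≤ Mmax k n := by
  apply le_csSup
  · rw [bddAbove_def]
    refine ⟨invN (longestPerm n), ?_⟩
    rintro N ⟨l', hl', rfl⟩
    calc l'.count k ≤ l'.length := List.count_le_length
    _ = invN (longestPerm n) := (isReducedWordFor_iff.mp hl').2
  · exact ⟨l, hl, rfl⟩

lemma mmax_spec (k n : ℕ) :
    ∃ l, IsReducedWordFor n l (longestPerm n) ∧ l.count k = Mmax k n := by
  have hne : {N | ∃ l : List ℕ, IsReducedWordFor n l (longestPerm n) ∧ l.count k = N}.Nonempty := by
    obtain ⟨l, h1, h2, _⟩ := exists_reduced_word (longestPerm n)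
    exact ⟨l.count k, l, isReducedWordFor_iff.mpr ⟨h1, h2⟩, rfl⟩
  have hbdd : BddAbove {N | ∃ l : List ℕ, IsReducedWordFor n l (longestPerm n) ∧ l.count k = N} := by
    rw [bddAbove_def]
    refine ⟨invN (longestPerm n), ?_⟩
    rintro N ⟨l', hl', rfl⟩
    calc l'.count k ≤ l'.length := List.count_le_length
    _ = invN (longestPerm n) := (isReducedWordFor_iff.mp hl').2
  have := Nat.sSup_mem hne hbdd
  exact this

lemma invN_longest_add (n m : ℕ) :
    invN (longestPerm m) + n * m + invN (longestPerm n) = invN (longestPerm (n + m)) := by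
  have h1 := two_mul_invN_longestPerm n
  have h2 := two_mul_invN_longestPerm m
  have h3 := two_mul_invN_longestPerm (n + m)
  have hring : (n + m) * (n + m) = n * n + 2 * (n * m) + m * m := by ring
  omega

lemma mmax_superadd (k n m : ℕ) : Mmax k n + Mmax k m ≤ Mmax k (n + m) := by
  obtain ⟨ln, hln, hcn⟩ := mmax_spec k n
  obtain ⟨lm, hlm, hcm⟩ := mmax_spec k m
  obtain ⟨lx, hx1, hx2, _⟩ := exists_reduced_word (bswap n m)
  have hlnred := isReducedWordFor_iff.mp hln
  have hlmred := isReducedWordFor_iff.mp hlm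
  have hlnlet := reduced_letters hln
  have hlmlet := reduced_letters hlm
  set W : List ℕ := lm ++ lx ++ ln with hW
  have hprod : ((W.map (sgen (n + m))).prod) = longestPerm (n + m) := by
    rw [hW, List.map_append, List.map_append, List.prod_append, List.prod_append]
    apply Equiv.ext
    intro x
    apply Fin.ext
    simp only [Equiv.Perm.mul_apply]
    have hx2' : ∀ y : Fin (n + m), ((bswap n m) y : ℕ)
        = if (y : ℕ) < n then (y : ℕ) + m else (y : ℕ) - n := fun y => rfl
    have hA := prod_sgen_congr (m := n) (N := n + m) (by omega) ln hlnlet x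
    by_cases hxn : (x : ℕ) < n
    · rw [dif_pos hxn] at hA
      rw [hln.1] at hA
      have hAval : (((ln.map (sgen (n + m))).prod) x : ℕ) = n - ((x : ℕ) + 1) := by
        rw [hA]; simp [longestPerm, Fin.val_rev]
      have hBval : ((bswap n m) (((ln.map (sgen (n + m))).prod) x) : ℕ)
          = n - ((x : ℕ) + 1) + m := by
        rw [hx2' _, hAval, if_pos (by omega)]
      have hC := prod_sgen_congr (m := m) (N := n + m) (by omega) lm hlmlet
        ((bswap n m) (((ln.map (sgen (n + m))).prod) x))
      rw [dif_neg (by omega)] at hC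
      rw [hx1] at *
      rw [hC, hBval]
      simp [longestPerm, Fin.val_rev]
      omega
    · rw [dif_neg hxn] at hA
      have hAval : (((ln.map (sgen (n + m))).prod) x : ℕ) = (x : ℕ) := hA
      have hBval : ((bswap n m) (((ln.map (sgen (n + m))).prod) x) : ℕ) = (x : ℕ) - n := by
        rw [hx2' _, hAval, if_neg (by omega)]
      have hC := prod_sgen_congr (m := m) (N := n + m) (by omega) lm hlmlet
        ((bswap n m) (((ln.map (sgen (n + m))).prod) x))
      have hxm : ((bswap n m) (((ln.map (sgen (n + m))).prod) x) : ℕ) < m := by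
        rw [hBval]; have := x.2; omega
      rw [dif_pos hxm] at hC
      rw [hlm.1] at hC
      rw [hx1] at *
      rw [hC]
      simp [longestPerm, Fin.val_rev]
      rw [hBval]
      have := x.2
      omega
  have hlen : W.length = invN (longestPerm (n + m)) := by
    rw [hW]
    simp only [List.length_append]
    rw [hlmred.2, hlnred.2, hx2, invN_bswap, ← invN_longest_add n m]
  have hred : IsReducedWordFor (n + m) W (longestPerm (n + m)) :=
    isReducedWordFor_iff.mpr ⟨hprod, hlen⟩
  have hcount : W.count k = lm.count k + lx.count k + ln.count k := by
    rw [hW]; simp [List.count_append]; omega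
  have := le_mmax (k := k) W hred
  rw [hcount, hcm, hcn] at this
  omega
end Aux4

section Aux5
open Finset Equiv

lemma count_eq_card_filter_range (l : List ℕ) (a : ℕ) :
    l.count a = ((Finset.range l.length).filter fun i => l.getD i 0 = a).card := by
  induction l with
  | nil => simp
  | cons b t ih =>
    rw [List.count_cons, ih, List.length_cons, Finset.card_filter, Finset.card_filter,
      Finset.sum_range_succ']
    simp only [List.getD_cons_succ, List.getD_cons_zero, beq_iff_eq]

lemma count_le_mul (n k : ℕ) (hk : 0 < k) (l : List ℕ)
    (hred : IsReducedWordFor n l (longestPerm n)) : l.count k ≤ k * n := by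
  obtain ⟨hprod, hlen⟩ := isReducedWordFor_iff.mp hred
  by_cases hkn : k < n
  swap
  · have hnm : k ∉ l := fun hm => by have := reduced_letters hred k hm; omega
    rw [List.count_eq_zero.mpr hnm]
    exact Nat.zero_le _
  have hk1n : k - 1 < n := by omega
  set L := l.length with hL
  set w : ℕ → Equiv.Perm (Fin n) := fun t => ((l.take t).map (sgen n)).prod with hw
  have hinvt : ∀ t, t ≤ L → invN (w t) = t := by
    intro t ht
    have h1 : invN (w t) ≤ t := by
      have := invN_le_length (l.take t) (w := w t) rfl
      rwa [List.length_take, min_eq_left ht] at this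
    have h2 : t ≤ invN (w t) := by
      have hsplit : w t * ((l.drop t).map (sgen n)).prod = longestPerm n := by
        rw [hw]
        simp only
        rw [← List.prod_append, ← List.map_append, List.take_append_drop, hprod]
      have hmul := invN_mul_prod_le (l.drop t) (w t)
      rw [hsplit] at hmul
      have hdl : (l.drop t).length = L - t := by simp [hL]
      rw [hdl] at hmul
      have hw0 : invN (longestPerm n) = L := hlen.symm
      omega
    omega
  have hstep : ∀ t (ht : t < L), w (t + 1) = w t * sgen n (l.get ⟨t, ht⟩) := by
    intro t ht
    rw [hw]
    simp only
    rw [List.take_succ, List.getElem?_eq_getElem ht, List.map_append, List.prod_append]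
    simp
  have hreal : ∀ t (ht : t < L), 0 < l.get ⟨t, ht⟩ ∧ l.get ⟨t, ht⟩ < n := by
    intro t ht
    by_contra hc
    have heq : w (t + 1) = w t := by rw [hstep t ht, sgen_junk hc, mul_one]
    have e1 := hinvt t (le_of_lt ht)
    have e2 := hinvt (t + 1) (by omega)
    rw [heq, e1] at e2
    omega
  have hQmono1 : ∀ t (ht : t < L), Qv (w t) ⊆ Qv (w (t + 1)) := by
    intro t ht
    have h12 := hreal t ht
    have hq := Qv_mul_sgen h12.1 h12.2 (w t)
    rw [← hstep t ht] at hq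
    by_cases he : opair (w t ⟨l.get ⟨t, ht⟩ - 1, by omega⟩) (w t ⟨l.get ⟨t, ht⟩, h12.2⟩)
        ∈ Qv (w t)
    · exfalso
      rw [symmDiff_singleton_of_mem he] at hq
      have c1 := hinvt t (le_of_lt ht)
      have c2 := hinvt (t + 1) (by omega)
      rw [invN] at c1 c2
      rw [hq, Finset.card_erase_of_mem he] at c2
      omega
    · rw [hq, symmDiff_singleton_of_not_mem he]
      exact Finset.subset_insert _ _
  have hQmono : ∀ s t, s ≤ t → t ≤ L → Qv (w s) ⊆ Qv (w t) := by
    intro s t hst htL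
    induction t with
    | zero => have : s = 0 := by omega
              subst this; exact subset_rfl
    | succ t iht =>
      rcases Nat.lt_or_ge s (t + 1) with h | h
      · exact subset_trans (iht (by omega) (by omega)) (hQmono1 t (by omega))
      · have : s = t + 1 := by omega
        subst this; exact subset_rfl
  have hkey : ∀ t (ht : t < L), l.get ⟨t, ht⟩ = k →
      (w t ⟨k - 1, hk1n⟩ < w t ⟨k, hkn⟩) ∧
      ((w t ⟨k - 1, hk1n⟩, w t ⟨k, hkn⟩) ∉ Qv (w t)) ∧
      ((w t ⟨k - 1, hk1n⟩, w t ⟨k, hkn⟩) ∈ Qv (w (t + 1))) := by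
    intro t ht hget
    have hq := Qv_mul_sgen hk hkn (w t)
    have hst := hstep t ht
    rw [hget] at hst
    rw [← hst] at hq
    have he : opair (w t ⟨k - 1, by omega⟩) (w t ⟨k, hkn⟩) ∉ Qv (w t) := by
      intro he
      rw [symmDiff_singleton_of_mem he] at hq
      have c1 := hinvt t (le_of_lt ht)
      have c2 := hinvt (t + 1) (by omega)
      rw [invN] at c1 c2
      rw [hq, Finset.card_erase_of_mem he] at c2
      omega
    have hP12 : (⟨k - 1, hk1n⟩ : Fin n) < ⟨k, hkn⟩ := by simp [Fin.lt_def]; omega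
    have hlt : w t ⟨k - 1, hk1n⟩ < w t ⟨k, hkn⟩ := by
      rcases lt_trichotomy (w t ⟨k - 1, hk1n⟩) (w t ⟨k, hkn⟩) with h | h | h
      · exact h
      · exfalso
        have := (w t).injective h
        simp [Fin.ext_iff] at this
        omega
      · exfalso
        apply he
        rw [opair, if_neg (not_lt.mpr (le_of_lt h)), mem_Qv]
        refine ⟨h, ?_⟩
        simp [hP12]
    have hee : opair (w t ⟨k - 1, by omega⟩) (w t ⟨k, hkn⟩)
        = (w t ⟨k - 1, hk1n⟩, w t ⟨k, hkn⟩) := by rw [opair, if_pos hlt]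
    rw [hee] at he hq
    refine ⟨hlt, he, ?_⟩
    rw [hq, symmDiff_singleton_of_not_mem he]
    exact Finset.mem_insert_self _ _
  -- counting
  rw [count_eq_card_filter_range]
  set T : Finset ℕ := (Finset.range l.length).filter fun i => l.getD i 0 = k with hT
  set E : ℕ → Fin n := fun t => w t ⟨k - 1, hk1n⟩ with hE
  have hTmem : ∀ t ∈ T, ∃ ht : t < L, l.get ⟨t, ht⟩ = k := by
    intro t htT
    rw [hT, Finset.mem_filter, Finset.mem_range] at htT
    refine ⟨htT.1, ?_⟩
    rw [List.get_eq_getElem, ← List.getD_eq_getElem (d := 0) l htT.1]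
    exact htT.2
  have himg : (T.image E).card ≤ n := by
    calc (T.image E).card ≤ (Finset.univ : Finset (Fin n)).card :=
      Finset.card_le_card (Finset.subset_univ _)
    _ = n := by rw [Finset.card_univ, Fintype.card_fin]
  have hfiber : ∀ v ∈ T.image E, (T.filter fun t => E t = v).card ≤ k := by
    intro v hv
    set F := T.filter fun t => E t = v with hF
    have hFne : F.Nonempty := by
      obtain ⟨t, ht, hEt⟩ := Finset.mem_image.mp hv
      exact ⟨t, Finset.mem_filter.mpr ⟨ht, hEt⟩⟩
    set tmax := F.max' hFne with htmax
    have htmaxF : tmax ∈ F := F.max'_mem hFne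
    have hFprop : ∀ t, t ∈ F → ∃ (ht : t < L), l.get ⟨t, ht⟩ = k ∧
        w t ⟨k - 1, hk1n⟩ = v := by
      intro t htF
      rw [hF, Finset.mem_filter] at htF
      obtain ⟨ht, hget⟩ := hTmem t htF.1
      exact ⟨ht, hget, htF.2⟩
    have hpair : ∀ t, t ∈ F → (v, w t ⟨k, hkn⟩) ∈ Qv (w (t + 1)) ∧
        (v, w t ⟨k, hkn⟩) ∉ Qv (w t) := by
      intro t htF
      obtain ⟨ht, hget, hEv⟩ := hFprop t htF
      have := hkey t ht hget
      rw [hEv] at this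
      exact ⟨this.2.2, this.2.1⟩
    have hDinj : ∀ t ∈ F, ∀ t' ∈ F, t < t' → w t ⟨k, hkn⟩ ≠ w t' ⟨k, hkn⟩ := by
      intro t htF t' ht'F htt' heq
      have h1 := (hpair t htF).1
      have h2 := (hpair t' ht'F).2
      obtain ⟨ht', _, _⟩ := hFprop t' ht'F
      have hsub : Qv (w (t + 1)) ⊆ Qv (w t') := hQmono _ _ (by omega) (by omega)
      exact h2 (by rw [← heq]; exact hsub h1)
    have hmaps : ∀ t ∈ F.erase tmax,
        (w tmax)⁻¹ (w t ⟨k, hkn⟩) ∈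
          (Finset.univ.filter fun z : Fin n => (z : ℕ) < k - 1) := by
      intro t htF
      have htne := Finset.ne_of_mem_erase htF
      have htF' := Finset.mem_of_mem_erase htF
      have htlt : t < tmax := lt_of_le_of_ne (F.le_max' t htF') htne
      obtain ⟨hmt, hvt, hEv⟩ := hFprop tmax htmaxF
      have h1 := (hpair t htF').1
      have hsub : Qv (w (t + 1)) ⊆ Qv (w tmax) := hQmono _ _ (by omega) (by omega)
      have hmem := hsub h1
      rw [mem_Qv] at hmem
      have hvpos : (w tmax)⁻¹ v = ⟨k - 1, hk1n⟩ := by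
        rw [← hEv]; simp
      rw [hvpos] at hmem
      simp only [Finset.mem_filter, Finset.mem_univ, true_and]
      have := hmem.2
      simpa [Fin.lt_def] using this
    have hinjOn : Set.InjOn (fun t => (w tmax)⁻¹ (w t ⟨k, hkn⟩))
        (F.erase tmax : Finset ℕ) := by
      intro t htF t' ht'F heq
      simp only at heq
      have heq2 : w t ⟨k, hkn⟩ = w t' ⟨k, hkn⟩ := by
        have := congrArg (w tmax) heq
        simpa using this
      by_contra hne
      rcases lt_or_gt_of_ne hne with h | h
      · exact hDinj t (Finset.mem_of_mem_erase (by exact_mod_cast htF)) t'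
          (Finset.mem_of_mem_erase (by exact_mod_cast ht'F)) h heq2
      · exact hDinj t' (Finset.mem_of_mem_erase (by exact_mod_cast ht'F)) t
          (Finset.mem_of_mem_erase (by exact_mod_cast htF)) h heq2.symm
    have hcard1 : (F.erase tmax).card ≤ k - 1 := by
      have := Finset.card_le_card_of_injOn _ hmaps hinjOn
      rwa [card_filter_val_lt (by omega)] at this
    have hcard2 : F.card - 1 ≤ k - 1 := by
      rw [← Finset.card_erase_of_mem htmaxF]
      exact hcard1
    have hcard3 : 1 ≤ F.card := Finset.card_pos.mpr hFne
    omega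
  calc T.card ≤ k * (T.image E).card := Finset.card_le_mul_card_image T k hfiber
  _ ≤ k * n := Nat.mul_le_mul_left k himg

lemma mmax_le_mul (k n : ℕ) (hk : 0 < k) : Mmax k n ≤ k * n :=
  mmax_le fun l hl => count_le_mul n k hk l hl

end Aux5

open Filter in
theorem stmt4 (k : ℕ) (hk : 0 < k) :
    ∃ c : ℝ, Tendsto (fun n : ℕ => (Mmax k n : ℝ) / n) atTop (nhds c) := by
  set u : ℕ → ℝ := fun n => -(Mmax k n : ℝ) with hu
  have hsub : Subadditive u := by
    intro a b
    have hmm := mmax_superadd k a b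
    have hcast : (Mmax k a : ℝ) + (Mmax k b : ℝ) ≤ (Mmax k (a + b) : ℝ) := by
      exact_mod_cast hmm
    simp only [hu]
    linarith
  have hbdd : BddBelow (Set.range fun n : ℕ => u n / n) := by
    refine ⟨-(k : ℝ), ?_⟩
    rintro x ⟨n, rfl⟩
    simp only [hu]
    rcases Nat.eq_zero_or_pos n with rfl | hn
    · simp
    · have h1 : (Mmax k n : ℝ) ≤ (k : ℝ) * n := by exact_mod_cast mmax_le_mul k n hk
      have hn' : (0 : ℝ) < n := by exact_mod_cast hn
      rw [neg_div, neg_le_neg_iff, div_le_iff₀ hn']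
      linarith
  refine ⟨-hsub.lim, ?_⟩
  have htend := (hsub.tendsto_lim hbdd).neg
  convert htend using 2 with n
  simp [hu, neg_div]
end

section
/- Let i be a reduced word for a permutation w in S_n and fix k. Let a_1 < ... < a_N be the positions of the letters s_k in i, and for each j let A_j be the image of {1,...,k} under the prefix permutation s_{i_1}...s_{i_{a_j}}, with A_0 = {1,...,k}. Then (A_0, A_1, ..., A_N) is a monotone weakly separated path: the collection {A_0,...,A_N} is weakly separated, and for each j, A_j is obtained from A_{j-1} by removing one element y and adding one element x with x > y. -/
/-- The set `{w(1), …, w(k)}` (1-indexed values) for `w ∈ S_n`. -/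
def topSet (n k : ℕ) (w : Equiv.Perm (Fin n)) : Finset ℕ :=
  Finset.image (fun j => (w j : ℕ) + 1)
    (Finset.univ.filter (fun j : Fin n => (j : ℕ) < k))

/-- The prefixes of `l` ending at each occurrence of the letter `k`. -/
def kPrefixes (k : ℕ) (l : List ℕ) : List (List ℕ) :=
  ((List.range l.length).filter (fun a => l[a]? = some k)).map (fun a => l.take (a + 1))

/-- The sequence `(A_0, A_1, …, A_N)` of `k`-sets extracted from the word `l`. -/
def extractedPath (n k : ℕ) (l : List ℕ) : List (Finset ℕ) :=
  topSet n k 1 :: (kPrefixes k l).map (fun p => topSet n k ((p.map (sgen n)).prod))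

open Finset Equiv List

lemma sgen_valid {n i : ℕ} (h1 : 0 < i) (h2 : i < n) :
    sgen n i = Equiv.swap ⟨i - 1, by omega⟩ ⟨i, h2⟩ := dif_pos ⟨h1, h2⟩

lemma sgen_invalid {n i : ℕ} (h : ¬(0 < i ∧ i < n)) : sgen n i = 1 := dif_neg h

lemma swap_lt {n : ℕ} {a b p q : Fin n} (hab : (a : ℕ) + 1 = (b : ℕ)) (hpq : p < q)
    (hne : ¬(p = a ∧ q = b)) : Equiv.swap a b p < Equiv.swap a b q := by
  have hne' : ¬((p : ℕ) = a ∧ (q : ℕ) = b) := by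
    simp only [Fin.ext_iff] at hne; exact hne
  rw [Fin.lt_def] at hpq ⊢
  rw [Equiv.swap_apply_def, Equiv.swap_apply_def]
  simp only [apply_ite (Fin.val), Fin.ext_iff]
  rcases not_and_or.mp hne' with hd | hd <;> split_ifs <;> omega

def invSet (n : ℕ) (w : Equiv.Perm (Fin n)) : Finset (Fin n × Fin n) :=
  Finset.univ.filter (fun pq => pq.1 < pq.2 ∧ w pq.2 < w pq.1)

def invNum (n : ℕ) (w : Equiv.Perm (Fin n)) : ℕ := (invSet n w).card

lemma invNum_one (n : ℕ) : invNum n 1 = 0 := by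
  rw [invNum, Finset.card_eq_zero, invSet, Finset.filter_eq_empty_iff]
  rintro ⟨p, q⟩ -
  simp only [Equiv.Perm.one_apply]
  rintro ⟨h1, h2⟩
  exact absurd h2 (not_lt.2 h1.le)

lemma mem_invSet {n : ℕ} {w : Equiv.Perm (Fin n)} {p q : Fin n} :
    (p, q) ∈ invSet n w ↔ p < q ∧ w q < w p := by simp [invSet]

lemma invNum_mul_swap_ascent {n : ℕ} {w : Equiv.Perm (Fin n)} {a b : Fin n}
    (hab : (a : ℕ) + 1 = (b : ℕ)) (h : w a < w b) :
    invNum n (w * Equiv.swap a b) = invNum n w + 1 := by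
  have hab' : a < b := by rw [Fin.lt_def]; omega
  have hmem : (a, b) ∈ invSet n (w * Equiv.swap a b) := by
    rw [mem_invSet]
    refine ⟨hab', ?_⟩
    simpa [Equiv.Perm.mul_apply] using h
  have hcard : ((invSet n (w * Equiv.swap a b)).erase (a, b)).card = (invSet n w).card := by
    apply Finset.card_bij (fun pq _ => (Equiv.swap a b pq.1, Equiv.swap a b pq.2))
    · rintro ⟨p, q⟩ hpq
      rw [Finset.mem_erase, mem_invSet] at hpq
      obtain ⟨hne, hlt, hinv⟩ := hpq
      rw [mem_invSet]
      constructor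
      · apply swap_lt hab hlt
        rintro ⟨rfl, rfl⟩; exact hne rfl
      · simpa [Equiv.Perm.mul_apply] using hinv
    · rintro ⟨p, q⟩ _ ⟨p', q'⟩ _ hh
      simp only [Prod.mk.injEq] at hh ⊢
      exact ⟨(Equiv.swap a b).injective hh.1, (Equiv.swap a b).injective hh.2⟩
    · rintro ⟨p, q⟩ hpq
      rw [mem_invSet] at hpq
      refine ⟨(Equiv.swap a b p, Equiv.swap a b q), ?_, by simp⟩
      rw [Finset.mem_erase, mem_invSet]
      have hne : ¬(p = b ∧ q = a) := by
        rintro ⟨rfl, rfl⟩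
        exact absurd hpq.1 (not_lt.2 hab'.le)
      refine ⟨?_, ?_, ?_⟩
      · intro hcontra
        rw [Prod.mk.injEq] at hcontra
        apply hne
        constructor
        · have := congrArg (Equiv.swap a b) hcontra.1; simpa using this
        · have := congrArg (Equiv.swap a b) hcontra.2; simpa using this
      · apply swap_lt hab hpq.1
        rintro ⟨rfl, rfl⟩
        have := hpq.2
        exact absurd h (not_lt.2 this.le)
      · simpa [Equiv.Perm.mul_apply] using hpq.2
  have h2 := Finset.card_erase_add_one hmem
  unfold invNum
  omega

lemma invNum_mul_swap_descent {n : ℕ} {w : Equiv.Perm (Fin n)} {a b : Fin n}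
    (hab : (a : ℕ) + 1 = (b : ℕ)) (h : w b < w a) :
    invNum n (w * Equiv.swap a b) + 1 = invNum n w := by
  have := invNum_mul_swap_ascent (w := w * Equiv.swap a b) hab
    (by simpa [Equiv.Perm.mul_apply] using h)
  rw [mul_assoc, Equiv.swap_mul_self, mul_one] at this
  omega

lemma invNum_eq_zero {n : ℕ} {w : Equiv.Perm (Fin n)} (h : invNum n w = 0) : w = 1 := by
  have hsm : StrictMono (w : Fin n → Fin n) := by
    intro p q hpq
    rcases lt_trichotomy (w p) (w q) with h' | h' | h'
    · exact h'
    · exact absurd (w.injective h') (ne_of_lt hpq)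
    · exfalso
      have : (p, q) ∈ invSet n w := mem_invSet.2 ⟨hpq, h'⟩
      simp [invNum, Finset.card_eq_zero] at h
      rw [h] at this
      exact absurd this (Finset.notMem_empty _)
  have hsm2 : StrictMono (w.symm : Fin n → Fin n) := by
    intro p q hpq
    rcases lt_trichotomy (w.symm p) (w.symm q) with h' | h' | h'
    · exact h'
    · exact absurd (by simpa using congrArg w h') (ne_of_lt hpq)
    · have := hsm h'
      simp only [Equiv.apply_symm_apply] at this
      exact absurd this (not_lt.2 hpq.le)
  refine Equiv.ext fun x => ?_
  have h1 : x ≤ w x := @StrictMono.le_apply (Fin n) _ (inferInstance : WellFoundedLT (Fin n)) _ hsm x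
  have h2 : w x ≤ x := by
    have := @StrictMono.le_apply (Fin n) _ (inferInstance : WellFoundedLT (Fin n)) _ hsm2 (w x)
    simpa using this
  simpa using le_antisymm h2 h1

lemma exists_descent {n : ℕ} {w : Equiv.Perm (Fin n)} (h : invNum n w ≠ 0) :
    ∃ a b : Fin n, (a : ℕ) + 1 = (b : ℕ) ∧ w b < w a := by
  by_contra hc
  push_neg at hc
  apply h
  have hsm : StrictMono (w : Fin n → Fin n) := by
    cases n with
    | zero => intro p; exact absurd p.2 (by omega)
    | succ m =>
      rw [Fin.strictMono_iff_lt_succ]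
      intro i
      have hab : ((i.castSucc : Fin (m+1)) : ℕ) + 1 = ((i.succ : Fin (m+1)) : ℕ) := by simp
      have hne : w i.castSucc ≠ w i.succ := by
        intro hh
        have := w.injective hh
        have := congrArg Fin.val this
        omega
      rcases lt_or_gt_of_ne hne with h' | h'
      · exact h'
      · exact absurd h' (not_lt.2 (hc _ _ hab))
  rw [invNum, Finset.card_eq_zero, invSet, Finset.filter_eq_empty_iff]
  rintro ⟨p, q⟩ -
  rintro ⟨h1, h2⟩
  exact absurd (hsm h1) (not_lt.2 h2.le)

lemma exists_word (n : ℕ) (w : Equiv.Perm (Fin n)) :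
    ∃ l : List ℕ, (l.map (sgen n)).prod = w ∧ l.length = invNum n w := by
  generalize hm : invNum n w = m
  induction m using Nat.strong_induction_on generalizing w with
  | _ m ih =>
    rcases Nat.eq_zero_or_pos m with rfl | hpos
    · exact ⟨[], by simp [invNum_eq_zero hm], rfl⟩
    · obtain ⟨a, b, hab, hdesc⟩ := exists_descent (by omega : invNum n w ≠ 0)
      have hs : sgen n (b : ℕ) = Equiv.swap a b := by
        rw [sgen_valid (by omega) b.2]
        congr 1
        apply Fin.ext
        simp
        omega
      have hd := invNum_mul_swap_descent hab hdesc
      obtain ⟨l', hl'1, hl'2⟩ := ih (m - 1) (by omega) (w * Equiv.swap a b) (by omega)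
      refine ⟨l' ++ [(b : ℕ)], ?_, ?_⟩
      · rw [List.map_append, List.prod_append]
        simp [hl'1, hs, mul_assoc]
      · simp [hl'2]
        omega

lemma invNum_le_length (n : ℕ) (l : List ℕ) :
    invNum n ((l.map (sgen n)).prod) ≤ l.length := by
  induction l using List.reverseRecOn with
  | nil => simp [invNum_one]
  | append_singleton l i ih =>
    rw [List.map_append, List.prod_append]
    simp only [List.map_cons, List.map_nil, List.prod_cons, List.prod_nil, mul_one,
      List.length_append, List.length_cons, List.length_nil]
    set u := (l.map (sgen n)).prod with hu
    by_cases hvalid : 0 < i ∧ i < n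
    · rw [sgen_valid hvalid.1 hvalid.2]
      set a : Fin n := ⟨i - 1, by omega⟩
      set b : Fin n := ⟨i, hvalid.2⟩
      have hab : (a : ℕ) + 1 = (b : ℕ) := by simp [a, b]; omega
      have hne : u a ≠ u b := by
        intro hh
        have := congrArg Fin.val (u.injective hh)
        simp [a, b] at this
        omega
      rcases lt_or_gt_of_ne hne with h' | h'
      · rw [invNum_mul_swap_ascent hab h']
        omega
      · have := invNum_mul_swap_descent hab h'
        omega
    · rw [sgen_invalid hvalid, mul_one]
      omega

/-- product of the first `a` letters -/
def prodTake (n : ℕ) (l : List ℕ) (a : ℕ) : Equiv.Perm (Fin n) :=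
  ((l.take a).map (sgen n)).prod

lemma prodTake_zero (n : ℕ) (l : List ℕ) : prodTake n l 0 = 1 := by simp [prodTake]

lemma prodTake_succ (n : ℕ) (l : List ℕ) (a : ℕ) (ha : a < l.length) :
    prodTake n l (a + 1) = prodTake n l a * sgen n (l.get ⟨a, ha⟩) := by
  rw [prodTake, prodTake, List.take_succ, List.map_append, List.prod_append]
  congr 1
  rw [List.getElem?_eq_getElem ha]
  simp

lemma prodTake_succ_ge (n : ℕ) (l : List ℕ) (a : ℕ) (ha : l.length ≤ a) :
    prodTake n l (a + 1) = prodTake n l a := by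
  rw [prodTake, prodTake, List.take_of_length_le ha, List.take_of_length_le (by omega)]

lemma key_ascent {n : ℕ} {l : List ℕ} {w : Equiv.Perm (Fin n)}
    (hl : IsReducedWordFor n l w) (a : ℕ) (ha : a < l.length) :
    ∃ (h1 : 0 < l.get ⟨a, ha⟩) (h2 : l.get ⟨a, ha⟩ < n),
      prodTake n l a ⟨l.get ⟨a, ha⟩ - 1, by omega⟩ < prodTake n l a ⟨l.get ⟨a, ha⟩, h2⟩ := by
  obtain ⟨hprod, hmin⟩ := hl
  set m := l.length with hm
  -- invNum w = m
  have hinvw : invNum n w = m := by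
    have h1 : invNum n w ≤ m := by rw [← hprod]; exact invNum_le_length n l
    obtain ⟨l₀, hl₀1, hl₀2⟩ := exists_word n w
    have := hmin l₀ hl₀1
    omega
  have hf_succ : ∀ b, b < m → invNum n (prodTake n l (b + 1)) ≤ invNum n (prodTake n l b) + 1 := by
    intro b hb
    rw [prodTake_succ n l b hb]
    set i := l.get ⟨b, hb⟩
    set u := prodTake n l b
    by_cases hvalid : 0 < i ∧ i < n
    · rw [sgen_valid hvalid.1 hvalid.2]
      set a' : Fin n := ⟨i - 1, by omega⟩
      set b' : Fin n := ⟨i, hvalid.2⟩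
      have hab : (a' : ℕ) + 1 = (b' : ℕ) := by simp [a', b']; omega
      have hne : u a' ≠ u b' := by
        intro hh
        have := congrArg Fin.val (u.injective hh)
        simp [a', b'] at this
        omega
      rcases lt_or_gt_of_ne hne with h' | h'
      · rw [invNum_mul_swap_ascent hab h']
      · have := invNum_mul_swap_descent hab h'
        omega
    · rw [sgen_invalid hvalid, mul_one]
      omega
  have hf_le : ∀ b, b ≤ m → invNum n (prodTake n l b) ≤ b := by
    intro b
    induction b with
    | zero => intro _; simp [prodTake_zero, invNum_one]
    | succ b ihb =>
      intro hb
      have := hf_succ b (by omega)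
      have := ihb (by omega)
      omega
  have hf_ge : ∀ d b, b + d = m → m ≤ invNum n (prodTake n l b) + d := by
    intro d
    induction d with
    | zero =>
      intro b hb
      have hbm : b = l.length := by omega
      have : prodTake n l b = w := by
        rw [prodTake, hbm, List.take_length, hprod]
      rw [this]
      omega
    | succ d ihd =>
      intro b hb
      have h1 := ihd (b + 1) (by omega)
      have h2 := hf_succ b (by omega)
      omega
  have hfa : invNum n (prodTake n l a) = a := by
    have := hf_le a (by omega)
    have := hf_ge (m - a) a (by omega)
    omega
  have hfa1 : invNum n (prodTake n l (a + 1)) = a + 1 := by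
    have := hf_le (a + 1) (by omega)
    have := hf_ge (m - (a + 1)) (a + 1) (by omega)
    omega
  -- now analyze the step
  rw [prodTake_succ n l a ha] at hfa1
  set i := l.get ⟨a, ha⟩ with hi
  set u := prodTake n l a with hu
  by_cases hvalid : 0 < i ∧ i < n
  · refine ⟨hvalid.1, hvalid.2, ?_⟩
    rw [sgen_valid hvalid.1 hvalid.2] at hfa1
    set a' : Fin n := ⟨i - 1, by omega⟩
    set b' : Fin n := ⟨i, hvalid.2⟩
    have hab : (a' : ℕ) + 1 = (b' : ℕ) := by simp [a', b']; omega
    have hne : u a' ≠ u b' := by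
      intro hh
      have := congrArg Fin.val (u.injective hh)
      simp [a', b'] at this
      omega
    rcases lt_or_gt_of_ne hne with h' | h'
    · exact h'
    · have := invNum_mul_swap_descent hab h'
      omega
  · rw [sgen_invalid hvalid, mul_one] at hfa1
    omega

lemma mono_lemma {n : ℕ} {l : List ℕ} {w : Equiv.Perm (Fin n)}
    (hl : IsReducedWordFor n l w) (a b : ℕ) (hab : a ≤ b) {p q : Fin n} (hpq : p < q)
    (hinv : (prodTake n l a).symm q < (prodTake n l a).symm p) :
    (prodTake n l b).symm q < (prodTake n l b).symm p := by
  induction b with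
  | zero =>
    have : a = 0 := by omega
    subst this
    exact hinv
  | succ b ih =>
    rcases Nat.lt_or_ge a (b + 1) with h | h
    · have ih' := ih (by omega)
      rcases Nat.lt_or_ge b l.length with hb | hb
      · obtain ⟨h1, h2, hasc⟩ := key_ascent hl b hb
        rw [prodTake_succ n l b hb, sgen_valid h1 h2]
        set i := l.get ⟨b, hb⟩ with hi
        set u := prodTake n l b with hu
        set a' : Fin n := ⟨i - 1, by omega⟩
        set b' : Fin n := ⟨i, h2⟩
        have hab' : (a' : ℕ) + 1 = (b' : ℕ) := by simp [a', b']; omega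
        have hsymm : ∀ x : Fin n, ((u * Equiv.swap a' b').symm x) = Equiv.swap a' b' (u.symm x) := by
          intro x
          apply (u * Equiv.swap a' b').injective
          simp [Equiv.Perm.mul_apply, Equiv.swap_apply_self]
        rw [hsymm, hsymm]
        apply swap_lt hab' ih'
        rintro ⟨he, hf⟩
        have hq : q = u a' := by rw [← he]; simp
        have hp : p = u b' := by rw [← hf]; simp
        rw [hp, hq] at hpq
        exact absurd hasc (not_lt.2 hpq.le)
      · rw [prodTake_succ_ge n l b hb]
        exact ih'
    · have : a = b + 1 := by omega
      subst this
      exact hinv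

lemma mem_topSet {n k : ℕ} {w : Equiv.Perm (Fin n)} {x : ℕ} :
    x ∈ topSet n k w ↔ ∃ j : Fin n, (j : ℕ) < k ∧ (w j : ℕ) + 1 = x := by
  simp [topSet]

lemma topSet_mul_ne {n k i : ℕ} (w : Equiv.Perm (Fin n)) (hik : i ≠ k) :
    topSet n k (w * sgen n i) = topSet n k w := by
  by_cases hvalid : 0 < i ∧ i < n
  · rw [sgen_valid hvalid.1 hvalid.2]
    set a' : Fin n := ⟨i - 1, by omega⟩
    set b' : Fin n := ⟨i, hvalid.2⟩
    have hpres : ∀ j : Fin n, (j : ℕ) < k → ((Equiv.swap a' b' j : Fin n) : ℕ) < k := by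
      intro j hj
      rcases eq_or_ne j a' with hja | hja
      · rw [hja, Equiv.swap_apply_left]
        have hjv : (j : ℕ) = i - 1 := by rw [hja]
        have hbv : ((b' : Fin n) : ℕ) = i := rfl
        omega
      · rcases eq_or_ne j b' with hjb | hjb
        · rw [hjb, Equiv.swap_apply_right]
          have hjv : (j : ℕ) = i := by rw [hjb]
          have hav : ((a' : Fin n) : ℕ) = i - 1 := rfl
          omega
        · rw [Equiv.swap_apply_of_ne_of_ne hja hjb]
          exact hj
    ext x
    rw [mem_topSet, mem_topSet]
    constructor
    · rintro ⟨j, hj, rfl⟩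
      exact ⟨Equiv.swap a' b' j, hpres j hj, by simp [Equiv.Perm.mul_apply]⟩
    · rintro ⟨j, hj, rfl⟩
      refine ⟨Equiv.swap a' b' j, hpres j hj, ?_⟩
      simp [Equiv.Perm.mul_apply]
  · rw [sgen_invalid hvalid, mul_one]

lemma topSet_mul_k {n k : ℕ} (w : Equiv.Perm (Fin n)) (hk1 : 0 < k) (hk2 : k < n) :
    topSet n k (w * sgen n k) =
      insert ((w ⟨k, hk2⟩ : ℕ) + 1) ((topSet n k w).erase ((w ⟨k - 1, by omega⟩ : ℕ) + 1)) := by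
  rw [sgen_valid hk1 hk2]
  set a' : Fin n := ⟨k - 1, by omega⟩
  set b' : Fin n := ⟨k, hk2⟩
  have hne : a' ≠ b' := by
    simp [a', b', Fin.ext_iff]
    omega
  ext x
  rw [mem_topSet, Finset.mem_insert, Finset.mem_erase, mem_topSet]
  constructor
  · rintro ⟨j, hj, rfl⟩
    rcases eq_or_ne j a' with rfl | hja
    · left
      simp [Equiv.Perm.mul_apply]
    · have hjb : j ≠ b' := by
        intro hh
        have : (j : ℕ) = k := by rw [hh]
        omega
      right
      constructor
      · simp only [Equiv.Perm.mul_apply, Equiv.swap_apply_of_ne_of_ne hja hjb]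
        intro hh
        have : w j = w a' := by
          apply Fin.ext
          omega
        exact hja (w.injective this)
      · exact ⟨j, hj, by simp [Equiv.Perm.mul_apply, Equiv.swap_apply_of_ne_of_ne hja hjb]⟩
  · rintro (rfl | ⟨hxne, j, hj, rfl⟩)
    · refine ⟨a', ?_, ?_⟩
      · simp [a']; omega
      · simp [Equiv.Perm.mul_apply]
    · have hja : j ≠ a' := by
        intro hh
        apply hxne
        rw [hh]
      have hjb : j ≠ b' := by
        intro hh
        have : (j : ℕ) = k := by rw [hh]
        omega
      exact ⟨j, hj, by simp [Equiv.Perm.mul_apply, Equiv.swap_apply_of_ne_of_ne hja hjb]⟩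

lemma WeaklySeparated.symm' {I J : Finset ℕ} (h : WeaklySeparated I J) : WeaklySeparated J I :=
  h.elim (fun h => Or.inr fun b hb a ha => h b hb a ha) (fun h => Or.inl fun b hb a ha => h b hb a ha)

/-- The `a`-th set in the sequence. -/
def FF (n k : ℕ) (l : List ℕ) (a : ℕ) : Finset ℕ := topSet n k (prodTake n l a)

lemma FF_succ_ne {n k : ℕ} {l : List ℕ} {a : ℕ} (h : l[a]? ≠ some k) :
    FF n k l (a + 1) = FF n k l a := by
  rcases Nat.lt_or_ge a l.length with ha | ha
  · rw [FF, FF, prodTake_succ n l a ha]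
    apply topSet_mul_ne
    intro hh
    apply h
    rw [List.getElem?_eq_getElem ha]
    simp [← hh]
  · rw [FF, FF, prodTake_succ_ge n l a ha]

lemma WS_of_le {n k : ℕ} {l : List ℕ} {w : Equiv.Perm (Fin n)}
    (hl : IsReducedWordFor n l w) (a b : ℕ) (hab : a ≤ b) :
    WeaklySeparated (FF n k l a) (FF n k l b) := by
  left
  intro x hx y hy
  rw [Finset.mem_sdiff] at hx hy
  obtain ⟨hx1, hx2⟩ := hx
  obtain ⟨hy1, hy2⟩ := hy
  rw [FF, mem_topSet] at hx1 hy1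
  obtain ⟨j, hj, hjx⟩ := hx1
  obtain ⟨j', hj', hjy⟩ := hy1
  set P := prodTake n l a j with hP
  set Q := prodTake n l b j' with hQ
  have hsymmP : (prodTake n l a).symm P = j := Equiv.symm_apply_apply _ _
  have hsymmQ : (prodTake n l b).symm Q = j' := Equiv.symm_apply_apply _ _
  have hPb : k ≤ (((prodTake n l b).symm P : Fin n) : ℕ) := by
    by_contra hc
    push_neg at hc
    apply hx2
    rw [FF, mem_topSet]
    exact ⟨(prodTake n l b).symm P, hc, by rw [Equiv.apply_symm_apply]; exact hjx⟩
  have hQa : k ≤ (((prodTake n l a).symm Q : Fin n) : ℕ) := by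
    by_contra hc
    push_neg at hc
    apply hy2
    rw [FF, mem_topSet]
    exact ⟨(prodTake n l a).symm Q, hc, by rw [Equiv.apply_symm_apply]; exact hjy⟩
  have hPQ : P ≠ Q := by
    intro hh
    apply hy2
    rw [FF, mem_topSet]
    refine ⟨j, hj, ?_⟩
    rw [← hjy, ← hh, hjx]
  have hlt : (P : ℕ) < (Q : ℕ) := by
    by_contra hc
    push_neg at hc
    have hQP : Q < P := by
      rw [Fin.lt_def]
      rcases Nat.lt_or_ge (Q : ℕ) (P : ℕ) with h' | h'
      · exact h'
      · exact absurd (Fin.ext (le_antisymm hc h')) (Ne.symm hPQ)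
    have hinv : (prodTake n l a).symm P < (prodTake n l a).symm Q := by
      rw [Fin.lt_def, hsymmP]
      omega
    have := mono_lemma hl a b hab hQP hinv
    rw [hsymmQ, Fin.lt_def] at this
    omega
  omega

lemma Rstep {n k : ℕ} {l : List ℕ} {w : Equiv.Perm (Fin n)}
    (hl : IsReducedWordFor n l w) (hk1 : 0 < k) (hk2 : k < n)
    (b : ℕ) (hb : b < l.length) (hbk : l.get ⟨b, hb⟩ = k) :
    ∃ x y, y ∈ FF n k l b ∧ x ∉ FF n k l b ∧ y < x ∧
      FF n k l (b + 1) = insert x ((FF n k l b).erase y) := by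
  subst hbk
  obtain ⟨h1, h2, hasc⟩ := key_ascent hl b hb
  have hm1 : l.get ⟨b, hb⟩ - 1 < n := by omega
  have hasc' : (prodTake n l b ⟨l.get ⟨b, hb⟩ - 1, hm1⟩ : Fin n) <
      prodTake n l b ⟨l.get ⟨b, hb⟩, h2⟩ := hasc
  rw [Fin.lt_def] at hasc'
  refine ⟨(prodTake n l b ⟨l.get ⟨b, hb⟩, h2⟩ : ℕ) + 1,
      (prodTake n l b ⟨l.get ⟨b, hb⟩ - 1, hm1⟩ : ℕ) + 1, ?_, ?_, ?_, ?_⟩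
  · rw [FF, mem_topSet]
    refine ⟨⟨l.get ⟨b, hb⟩ - 1, hm1⟩, ?_, rfl⟩
    show l.get ⟨b, hb⟩ - 1 < l.get ⟨b, hb⟩
    omega
  · rw [FF, mem_topSet]
    rintro ⟨j, hj, hjx⟩
    have hje : prodTake n l b j = prodTake n l b ⟨l.get ⟨b, hb⟩, h2⟩ := Fin.ext (by omega)
    have hj' : j = ⟨l.get ⟨b, hb⟩, h2⟩ := (prodTake n l b).injective hje
    rw [hj'] at hj
    have : l.get ⟨b, hb⟩ < l.get ⟨b, hb⟩ := hj
    omega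
  · omega
  · rw [FF, FF, prodTake_succ n l b hb]
    exact topSet_mul_k (prodTake n l b) h1 h2

/-- the path truncated at position `m` -/
def LL (n k : ℕ) (l : List ℕ) (m : ℕ) : List (Finset ℕ) :=
  FF n k l 0 :: ((List.range m).filter (fun a => l[a]? = some k)).map (fun a => FF n k l (a + 1))

lemma extractedPath_eq (n k : ℕ) (l : List ℕ) :
    extractedPath n k l = LL n k l l.length := by
  simp only [extractedPath, LL, kPrefixes, List.map_map, FF, prodTake_zero, Function.comp]
  rfl

lemma chain_LL {n k : ℕ} {l : List ℕ} {w : Equiv.Perm (Fin n)}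
    (hl : IsReducedWordFor n l w) (hk1 : 0 < k) (hk2 : k < n) (m : ℕ) :
    List.Chain' (fun A B => ∃ x y, y ∈ A ∧ x ∉ A ∧ y < x ∧ B = insert x (A.erase y))
        (LL n k l m) ∧
      (LL n k l m).getLast? = some (FF n k l m) := by
  induction m with
  | zero => simp [LL]; exact List.isChain_singleton _
  | succ m ih =>
    by_cases hpm : l[m]? = some k
    · have hsplit : LL n k l (m + 1) = LL n k l m ++ [FF n k l (m + 1)] := by
        rw [LL, LL, List.range_succ, List.filter_append]
        simp [List.filter_singleton, hpm]
      have hm : m < l.length := by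
        rcases List.getElem?_eq_some_iff.1 hpm with ⟨h, _⟩
        exact h
      have hgk : l.get ⟨m, hm⟩ = k := by
        have := List.getElem?_eq_getElem hm
        rw [hpm] at this
        simpa using this.symm
      constructor
      · rw [hsplit, show ∀ R (l : List (Finset ℕ)), List.Chain' R l = List.IsChain R l from fun _ _ => rfl, List.isChain_append]
        refine ⟨ih.1, List.isChain_singleton _, ?_⟩
        intro X hX Y hY
        rw [ih.2, Option.mem_def, Option.some.injEq] at hX
        simp only [List.head?_cons, Option.mem_def, Option.some.injEq] at hY
        subst hX
        subst hY
        exact Rstep hl hk1 hk2 m hm hgk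
      · rw [hsplit, List.getLast?_concat]
    · have hsplit : LL n k l (m + 1) = LL n k l m := by
        rw [LL, LL, List.range_succ, List.filter_append]
        simp [List.filter_singleton, hpm]
      have hFF : FF n k l (m + 1) = FF n k l m := FF_succ_ne hpm
      rw [hsplit, hFF]
      exact ih

lemma mem_LL {n k : ℕ} {l : List ℕ} {m : ℕ} {A : Finset ℕ} (hA : A ∈ LL n k l m) :
    ∃ a, A = FF n k l a := by
  rw [LL, List.mem_cons] at hA
  rcases hA with rfl | hA
  · exact ⟨0, rfl⟩
  · obtain ⟨a, _, rfl⟩ := List.mem_map.1 hA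
    exact ⟨a + 1, rfl⟩

theorem stmt11 (n k : ℕ) (hk1 : 1 ≤ k) (hk2 : k ≤ n - 1)
    (w : Equiv.Perm (Fin n)) (l : List ℕ) (hl : IsReducedWordFor n l w) :
    IsMWSPath (extractedPath n k l) := by
  have hn : 2 ≤ n := by
    rcases Nat.lt_or_ge n 2 with h | h
    · interval_cases n <;> omega
    · exact h
  have hkn : k < n := by omega
  rw [extractedPath_eq]
  constructor
  · intro A hA B hB
    obtain ⟨a, rfl⟩ := mem_LL hA
    obtain ⟨b, rfl⟩ := mem_LL hB
    rcases le_total a b with hab | hab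
    · exact WS_of_le hl a b hab
    · exact (WS_of_le hl b a hab).symm'
  · exact (chain_LL hl (by omega) hkn l.length).1
end
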